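/- Let X ~ N(m, σ²) with σ > 0, and set α = m/σ. Then E[(max(X, 0))²] = (m² + σ²)·Φ(α) + mσ·φ(α), where φ and Φ are the standard normal pdf and cdf. -/

import Mathlib

open MeasureTheory ProbabilityTheory

noncomputable def stdNormalPhi : ℝ → ℝ := fun x => cdf (gaussianReal 0 1) x

noncomputable def stdNormalPdf : ℝ → ℝ :=
  fun x => (Real.sqrt (2 * Real.pi))⁻¹ * Real.exp (-x ^ 2 / 2)

open Real Set Filter Topology

lemma gaussianPDFReal_eq_stdNormalPdf : gaussianPDFReal 0 1 = stdNormalPdf := by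
  funext x
  simp [gaussianPDFReal, stdNormalPdf]

lemma stdNormalPdf_nonneg (x : ℝ) : 0 ≤ stdNormalPdf x := by
  unfold stdNormalPdf; positivity

lemma stdNormalPdf_neg (x : ℝ) : stdNormalPdf (-x) = stdNormalPdf x := by
  simp [stdNormalPdf, neg_sq]

lemma continuous_stdNormalPdf : Continuous stdNormalPdf := by
  unfold stdNormalPdf; fun_prop

lemma integrable_pow_mul_pdf (n : ℕ) :
    Integrable (fun z : ℝ => z ^ n * stdNormalPdf z) := by
  have h := integrable_rpow_mul_exp_neg_mul_sq (b := 1/2) (by norm_num) (s := (n : ℝ))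
    (by exact neg_one_lt_zero.trans_le (Nat.cast_nonneg n))
  have h2 := h.const_mul ((Real.sqrt (2 * Real.pi))⁻¹)
  refine h2.congr (Filter.Eventually.of_forall fun z => ?_)
  simp only [Real.rpow_natCast, stdNormalPdf,
    show -(1/2 : ℝ) * z ^ 2 = -z ^ 2 / 2 by ring]
  ring

lemma hasDerivAt_stdNormalPdf (z : ℝ) :
    HasDerivAt stdNormalPdf (-z * stdNormalPdf z) z := by
  have h1 : HasDerivAt (fun x : ℝ => -x ^ 2 / 2) (-z) z := by
    have := ((hasDerivAt_pow 2 z).neg).div_const 2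
    refine this.congr_deriv ?_
    ring
  have h2 := (h1.exp).const_mul ((Real.sqrt (2 * Real.pi))⁻¹)
  unfold stdNormalPdf
  refine h2.congr_deriv ?_
  ring

lemma tendsto_pow_mul_pdf (n : ℕ) :
    Tendsto (fun z : ℝ => z ^ n * stdNormalPdf z) atTop (𝓝 0) := by
  have h := rpow_mul_exp_neg_mul_sq_isLittleO_exp_neg (b := 1/2) (by norm_num) (n : ℝ)
  have h2 : Tendsto (fun x : ℝ => Real.exp (-(1/2) * x)) atTop (𝓝 0) := by
    apply Real.tendsto_exp_atBot.comp
    exact Tendsto.const_mul_atTop_of_neg (by norm_num) tendsto_id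
  have h3 := h.trans_tendsto h2
  have h4 := h3.const_mul ((Real.sqrt (2 * Real.pi))⁻¹)
  rw [mul_zero] at h4
  refine h4.congr fun z => ?_
  simp only [Real.rpow_natCast, stdNormalPdf,
    show -(1/2 : ℝ) * z ^ 2 = -z ^ 2 / 2 by ring]
  ring

lemma integral_Ioi_mul_pdf (a : ℝ) :
    ∫ z in Ioi a, z * stdNormalPdf z = stdNormalPdf a := by
  have hderiv : ∀ x ∈ Ici a, HasDerivAt (fun z => -stdNormalPdf z)
      (x * stdNormalPdf x) x := by
    intro x _
    have := (hasDerivAt_stdNormalPdf x).neg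
    refine this.congr_deriv ?_
    ring
  have hint : IntegrableOn (fun z => z * stdNormalPdf z) (Ioi a) := by
    have := (integrable_pow_mul_pdf 1).integrableOn (s := Ioi a)
    simpa [pow_one] using this
  have htend : Tendsto (fun z => -stdNormalPdf z) atTop (𝓝 0) := by
    have := (tendsto_pow_mul_pdf 0).neg
    simpa using this
  have := integral_Ioi_of_hasDerivAt_of_tendsto' hderiv hint htend
  simpa using this

lemma integral_Ioi_sq_mul_pdf (a : ℝ) :
    ∫ z in Ioi a, z ^ 2 * stdNormalPdf z
      = a * stdNormalPdf a + ∫ z in Ioi a, stdNormalPdf z := by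
  have hderiv : ∀ x ∈ Ici a, HasDerivAt (fun z => -(z * stdNormalPdf z))
      (x ^ 2 * stdNormalPdf x - stdNormalPdf x) x := by
    intro x _
    have h1 := (hasDerivAt_id x).mul (hasDerivAt_stdNormalPdf x)
    have := h1.neg
    refine this.congr_deriv ?_
    simp only [id_eq]
    ring
  have hint2 : IntegrableOn (fun z : ℝ => z ^ 2 * stdNormalPdf z) (Ioi a) :=
    (integrable_pow_mul_pdf 2).integrableOn
  have hint0 : IntegrableOn (fun z : ℝ => stdNormalPdf z) (Ioi a) := by
    have := (integrable_pow_mul_pdf 0).integrableOn (s := Ioi a)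
    simpa using this
  have hint : IntegrableOn (fun z : ℝ => z ^ 2 * stdNormalPdf z - stdNormalPdf z) (Ioi a) :=
    hint2.sub hint0
  have htend : Tendsto (fun z => -(z * stdNormalPdf z)) atTop (𝓝 0) := by
    have := (tendsto_pow_mul_pdf 1).neg
    simpa [pow_one] using this
  have key := integral_Ioi_of_hasDerivAt_of_tendsto' hderiv hint htend
  rw [integral_sub hint2 hint0] at key
  simp only [zero_sub, neg_neg] at key
  linarith

lemma stdNormalPhi_eq (a : ℝ) :
    stdNormalPhi a = ∫ x in Iic a, stdNormalPdf x := by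
  unfold stdNormalPhi
  rw [cdf_eq_real, measureReal_def, gaussianReal_apply_eq_integral 0 one_ne_zero,
    ENNReal.toReal_ofReal (integral_nonneg fun x => gaussianPDFReal_nonneg 0 1 x),
    gaussianPDFReal_eq_stdNormalPdf]

lemma integral_Ioi_pdf (a : ℝ) :
    ∫ z in Ioi (-a), stdNormalPdf z = stdNormalPhi a := by
  rw [stdNormalPhi_eq]
  calc ∫ z in Ioi (-a), stdNormalPdf z = ∫ z in Ioi (-a), stdNormalPdf (-z) := by
        refine setIntegral_congr_fun measurableSet_Ioi fun x _ => ?_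
        rw [stdNormalPdf_neg]
    _ = ∫ x in Iic a, stdNormalPdf x := by
        simpa using integral_comp_neg_Ioi (-a) stdNormalPdf

lemma gaussianReal_eq_map (m : ℝ) (σ : ℝ) (hσ : 0 < σ) :
    gaussianReal m (⟨σ ^ 2, sq_nonneg σ⟩ : NNReal)
      = (gaussianReal 0 1).map (fun z => σ * z + m) := by
  have h1 : (gaussianReal 0 1).map (σ * ·)
      = gaussianReal 0 (⟨σ ^ 2, sq_nonneg σ⟩ : NNReal) := by
    rw [gaussianReal_map_const_mul]
    congr 1
    · ring
    · ext; simp; rfl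
  calc gaussianReal m (⟨σ ^ 2, sq_nonneg σ⟩ : NNReal)
      = gaussianReal (0 + m) (⟨σ ^ 2, sq_nonneg σ⟩ : NNReal) := by rw [zero_add]
    _ = (gaussianReal 0 (⟨σ ^ 2, sq_nonneg σ⟩ : NNReal)).map (· + m) :=
        (gaussianReal_map_add_const m).symm
    _ = ((gaussianReal 0 1).map (σ * ·)).map (· + m) := by rw [h1]
    _ = (gaussianReal 0 1).map (fun z => σ * z + m) := by
        rw [Measure.map_map (g := (· + m)) (f := (σ * ·)) (by fun_prop) (by fun_prop)]
        rfl

lemma integral_gaussian01 (f : ℝ → ℝ) :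
    ∫ z, f z ∂(gaussianReal 0 1) = ∫ z, stdNormalPdf z * f z := by
  rw [gaussianReal_of_var_ne_zero 0 one_ne_zero]
  have hg : gaussianPDF 0 1
      = fun x => ((Real.toNNReal (gaussianPDFReal 0 1 x) : NNReal) : ENNReal) := rfl
  rw [hg, integral_withDensity_eq_integral_smul
    ((measurable_gaussianPDFReal 0 1).real_toNNReal) f]
  congr 1
  funext z
  rw [NNReal.smul_def, Real.coe_toNNReal _ (gaussianPDFReal_nonneg 0 1 z),
    gaussianPDFReal_eq_stdNormalPdf]
  simp [smul_eq_mul]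

theorem stmt_11 (m : ℝ) (σ : ℝ) (hσ : 0 < σ) :
    ∫ x, (max x 0) ^ 2 ∂(gaussianReal m (⟨σ ^ 2, sq_nonneg σ⟩ : NNReal))
      = (m ^ 2 + σ ^ 2) * stdNormalPhi (m / σ) + m * σ * stdNormalPdf (m / σ) := by
  have hσ' : σ ≠ 0 := hσ.ne'
  rw [gaussianReal_eq_map m σ hσ,
    integral_map (f := fun x : ℝ => max x 0 ^ 2) (by fun_prop)
      (by exact ((continuous_id'.max continuous_const).pow 2).aestronglyMeasurable),
    integral_gaussian01]
  set a : ℝ := -(m / σ) with ha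
  -- integrability facts
  have hquad : Integrable (fun z : ℝ => stdNormalPdf z * (σ * z + m) ^ 2) := by
    have h := (((integrable_pow_mul_pdf 2).const_mul (σ ^ 2)).add
      (((integrable_pow_mul_pdf 1).const_mul (2 * σ * m)).add
        ((integrable_pow_mul_pdf 0).const_mul (m ^ 2))))
    refine h.congr (Filter.Eventually.of_forall fun z => ?_)
    simp only [Pi.add_apply]
    ring
  have hF : Integrable (fun z : ℝ => stdNormalPdf z * max (σ * z + m) 0 ^ 2) := by
    refine hquad.mono' ?_ (Filter.Eventually.of_forall fun z => ?_)
    · exact Continuous.aestronglyMeasurable (by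
        exact continuous_stdNormalPdf.mul
          ((((continuous_const.mul continuous_id).add continuous_const).max
            continuous_const).pow 2))
    · have hmax : max (σ * z + m) 0 ^ 2 ≤ (σ * z + m) ^ 2 := by
        rcases le_total (σ * z + m) 0 with h | h
        · rw [max_eq_right h]; simpa using sq_nonneg (σ * z + m)
        · rw [max_eq_left h]
      rw [Real.norm_eq_abs,
        abs_of_nonneg (mul_nonneg (stdNormalPdf_nonneg z) (by positivity))]
      exact mul_le_mul_of_nonneg_left hmax (stdNormalPdf_nonneg z)
  -- split the integral at a
  rw [← intervalIntegral.integral_Iic_add_Ioi (b := a) hF.integrableOn hF.integrableOn]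
  have hIic : ∫ z in Iic a, stdNormalPdf z * max (σ * z + m) 0 ^ 2 = 0 := by
    rw [setIntegral_congr_fun measurableSet_Iic (g := fun _ => (0 : ℝ)) ?_, integral_zero]
    intro z hz
    have hz' : σ * z + m ≤ 0 := by
      have : z ≤ -(m / σ) := hz
      have h2 : σ * z ≤ σ * (-(m / σ)) := by
        exact mul_le_mul_of_nonneg_left this hσ.le
      rw [mul_neg, mul_div_cancel₀ _ hσ'] at h2
      linarith
    simp [max_eq_right hz']
  rw [hIic, zero_add]
  have hIoi : ∫ z in Ioi a, stdNormalPdf z * max (σ * z + m) 0 ^ 2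
      = ∫ z in Ioi a, (σ ^ 2 * (z ^ 2 * stdNormalPdf z)
          + (2 * σ * m * (z * stdNormalPdf z) + m ^ 2 * stdNormalPdf z)) := by
    refine setIntegral_congr_fun measurableSet_Ioi fun z hz => ?_
    have hz' : 0 ≤ σ * z + m := by
      have : -(m / σ) < z := hz
      have h2 : σ * (-(m / σ)) < σ * z := by exact mul_lt_mul_of_pos_left this hσ
      rw [mul_neg, mul_div_cancel₀ _ hσ'] at h2
      nlinarith
    rw [max_eq_left hz']
    ring
  rw [hIoi]
  have hi2 : IntegrableOn (fun z : ℝ => σ ^ 2 * (z ^ 2 * stdNormalPdf z)) (Ioi a) :=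
    ((integrable_pow_mul_pdf 2).const_mul _).integrableOn
  have hi1 : IntegrableOn (fun z : ℝ => 2 * σ * m * (z * stdNormalPdf z)) (Ioi a) := by
    have := ((integrable_pow_mul_pdf 1).const_mul (2 * σ * m)).integrableOn (s := Ioi a)
    simpa [pow_one] using this
  have hi0 : IntegrableOn (fun z : ℝ => m ^ 2 * stdNormalPdf z) (Ioi a) := by
    have := ((integrable_pow_mul_pdf 0).const_mul (m ^ 2)).integrableOn (s := Ioi a)
    simpa using this
  have hi10 : IntegrableOn (fun z : ℝ => 2 * σ * m * (z * stdNormalPdf z)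
      + m ^ 2 * stdNormalPdf z) (Ioi a) := hi1.add hi0
  rw [integral_add hi2 hi10, integral_add hi1 hi0,
    integral_const_mul, integral_const_mul, integral_const_mul,
    integral_Ioi_sq_mul_pdf, integral_Ioi_mul_pdf, ha, integral_Ioi_pdf,
    stdNormalPdf_neg]
  field_simp
  ring
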